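/- Consider a feedforward network with L ≥ 2 layers in which all hidden layers have the same width h, the hidden activation σ is either the hyperbolic tangent tanh or the logistic sigmoid t ↦ 1/(1+e^{−t}), and the last layer output is f_θ(x) = tanh(a^L), together with a dataset of m points. Then, on the open set of parameters θ for which f_θ(x_i) ∈ (0,1) for all 1 ≤ i ≤ m, the BCE empirical risk θ ↦ Σ_{i=1}^m [−y_i log f_θ(x_i) − (1−y_i) log(1 − f_θ(x_i))] is a Pfaffian function of format (3(L−2)+7, 1, m((L−1)h+5)). -/

import Mathlib

open MvPolynomial

noncomputable section

/-- A Pfaffian chain of order `ℓ` and degree `α` on an open set `U ⊆ ℝ^ι`: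
real analytic functions whose partial derivatives are polynomials of total degree at most `α`
in the coordinates and the previous chain functions (including itself). -/
def IsPfaffianChain {ι : Type} [Fintype ι] [DecidableEq ι] (ℓ α : ℕ)
    (U : Set (ι → ℝ)) (f : Fin ℓ → (ι → ℝ) → ℝ) : Prop :=
  IsOpen U ∧ 1 ≤ α ∧ (∀ i, AnalyticOnNhd ℝ (f i) U) ∧
    ∀ (i : Fin ℓ) (j : ι), ∃ P : MvPolynomial (ι ⊕ Fin (i.1 + 1)) ℝ, P.totalDegree ≤ α ∧
      ∀ x ∈ U, fderiv ℝ (f i) x (Pi.single j 1) =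
        MvPolynomial.eval (Sum.elim x fun k : Fin (i.1 + 1) => f (Fin.castLE i.isLt k) x) P

/-- `g : ℝ^ι → ℝ` is a Pfaffian function of format `(α, β, ℓ)` on the open set `U`:
it is a polynomial of total degree at most `β` in the coordinates and the functions of a
Pfaffian chain of order `ℓ` and degree `α`. -/
def IsPfaffianWithFormat {ι : Type} [Fintype ι] [DecidableEq ι]
    (U : Set (ι → ℝ)) (g : (ι → ℝ) → ℝ) (α β ℓ : ℕ) : Prop :=
  ∃ f : Fin ℓ → (ι → ℝ) → ℝ, IsPfaffianChain ℓ α U f ∧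
    ∃ Q : MvPolynomial (ι ⊕ Fin ℓ) ℝ, Q.totalDegree ≤ β ∧
      ∀ x ∈ U, g x = MvPolynomial.eval (Sum.elim x fun k => f k x) Q

/-- Index set for the parameters of a feedforward network with `L` layers and widths `n`:
the augmented weight matrix of layer `l+1` (1-based) has shape `n (l+1) × (n l + 1)`,
column `0` being the bias. -/
abbrev ParamIdx (L : ℕ) (n : ℕ → ℕ) : Type :=
  Σ l : Fin L, Fin (n (l.1 + 1)) × Fin (n l.1 + 1)

/-- Entry `(j, i)` of the augmented weight matrix of (1-based) layer `l+1`. -/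
def netWeight {L : ℕ} {n : ℕ → ℕ} (θ : ParamIdx L n → ℝ) (l : ℕ)
    (j : Fin (n (l + 1))) (i : Fin (n l + 1)) : ℝ :=
  if hl : l < L then θ ⟨⟨l, hl⟩, (j, i)⟩ else 0

/-- Augmented layer outputs: `netZ σ θ x l = z^l = (1, σ (a^l))`, with `z^0 = (1, x)`. -/
def netZ {L : ℕ} {n : ℕ → ℕ} (σ : ℝ → ℝ) (θ : ParamIdx L n → ℝ) (x : Fin (n 0) → ℝ) :
    (l : ℕ) → Fin (n l + 1) → ℝ
  | 0 => Fin.cons 1 x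
  | l + 1 => Fin.cons 1 fun j => σ (∑ i, netWeight θ l j i * netZ σ θ x l i)

/-- Preactivations: `netPreact σ θ x l = a^{l+1} = W^{l+1} z^l` (1-based layer `l+1`). -/
def netPreact {L : ℕ} {n : ℕ → ℕ} (σ : ℝ → ℝ) (θ : ParamIdx L n → ℝ) (x : Fin (n 0) → ℝ)
    (l : ℕ) (j : Fin (n (l + 1))) : ℝ :=
  ∑ i, netWeight θ l j i * netZ σ θ x l i

/-- Output of the network with a linear last layer: `a^L` (a scalar, since `n L = 1`). -/
def netOutLin {L : ℕ} {n : ℕ → ℕ} (σ : ℝ → ℝ) (θ : ParamIdx L n → ℝ)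
    (x : Fin (n 0) → ℝ) : ℝ :=
  ∑ j, netPreact σ θ x (L - 1) j

/-- The logistic sigmoid. -/
def logisticFn (t : ℝ) : ℝ := 1 / (1 + Real.exp (-t))

set_option linter.unusedSectionVars false

namespace S7Aux


/-! ### Analytic facts about the scalar functions -/

lemma analyticAt_sinh (t : ℝ) : AnalyticAt ℝ Real.sinh t := by
  have : Real.sinh = fun u : ℝ => (Real.exp u - Real.exp (-u)) / 2 := by
    funext u; rw [Real.sinh_eq]
  rw [this]
  exact ((analyticAt_rexp.comp (analyticAt_id)).sub
    (analyticAt_rexp.comp (analyticAt_id.neg))).div analyticAt_const (by norm_num)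

lemma analyticAt_cosh (t : ℝ) : AnalyticAt ℝ Real.cosh t := by
  have : Real.cosh = fun u : ℝ => (Real.exp u + Real.exp (-u)) / 2 := by
    funext u; rw [Real.cosh_eq]
  rw [this]
  exact ((analyticAt_rexp.comp (analyticAt_id)).add
    (analyticAt_rexp.comp (analyticAt_id.neg))).div analyticAt_const (by norm_num)

lemma analyticAt_tanh (t : ℝ) : AnalyticAt ℝ Real.tanh t := by
  have : Real.tanh = fun u : ℝ => Real.sinh u / Real.cosh u := by
    funext u; rw [Real.tanh_eq_sinh_div_cosh]
  rw [this]
  exact (analyticAt_sinh t).div (analyticAt_cosh t) (Real.cosh_pos t).ne'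

lemma analyticAt_rlog {t : ℝ} (ht : 0 < t) : AnalyticAt ℝ Real.log t := by
  have hc : AnalyticAt ℝ (Complex.log) ((t : ℝ) : ℂ) :=
    (analyticAt_clog (Complex.ofReal_mem_slitPlane.2 ht)).restrictScalars
  have h1 : AnalyticAt ℝ (fun u : ℝ => (Complex.log (u : ℂ)).re) t :=
    (Complex.reCLM.analyticAt _).comp (hc.comp (Complex.ofRealCLM.analyticAt t))
  have h2 : (fun u : ℝ => (Complex.log (u : ℂ)).re) = Real.log := by
    funext u
    rw [Complex.log_re]
    simp [Real.log_abs]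
  rwa [h2] at h1

lemma hasDerivAt_tanh (t : ℝ) : HasDerivAt Real.tanh (1 - Real.tanh t ^ 2) t := by
  have h : Real.tanh = fun u : ℝ => Real.sinh u / Real.cosh u := by
    funext u; rw [Real.tanh_eq_sinh_div_cosh]
  rw [h]
  have : HasDerivAt (fun u : ℝ => Real.sinh u / Real.cosh u)
      ((Real.cosh t * Real.cosh t - Real.sinh t * Real.sinh t) / Real.cosh t ^ 2) t :=
    (Real.hasDerivAt_sinh t).fun_div (Real.hasDerivAt_cosh t) (Real.cosh_pos t).ne'
  convert this using 1
  have hc := (Real.cosh_pos t).ne'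
  show 1 - (Real.sinh t / Real.cosh t) ^ 2 = _
  field_simp



lemma one_add_exp_neg_pos (t : ℝ) : 0 < 1 + Real.exp (-t) := by positivity

lemma analyticAt_logistic (t : ℝ) : AnalyticAt ℝ logisticFn t := by
  unfold logisticFn
  exact analyticAt_const.div
    (analyticAt_const.add (analyticAt_rexp.comp analyticAt_id.neg))
    (one_add_exp_neg_pos t).ne'

lemma hasDerivAt_logistic (t : ℝ) :
    HasDerivAt logisticFn (logisticFn t * (1 - logisticFn t)) t := by
  have h1 : HasDerivAt (fun u : ℝ => 1 + Real.exp (-u)) (-Real.exp (-t)) t := by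
    have := ((Real.hasDerivAt_exp (-t)).comp t (hasDerivAt_neg t)).const_add 1
    simpa using this
  have h2 := (hasDerivAt_const t (1:ℝ)).div h1 (one_add_exp_neg_pos t).ne'
  have h3 : HasDerivAt logisticFn
      ((0 * (1 + Real.exp (-t)) - 1 * -Real.exp (-t)) / (1 + Real.exp (-t)) ^ 2) t := h2
  convert h3 using 1
  unfold logisticFn
  have := (one_add_exp_neg_pos t).ne'
  field_simp
  ring

/-- Unified derivative: σ' t = A + B * σ t + C * (σ t)^2. -/
lemma sigma_deriv {σ : ℝ → ℝ} (hσ : σ = Real.tanh ∨ σ = logisticFn) :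
    ∃ A B C : ℝ, ∀ t : ℝ, HasDerivAt σ (A + B * σ t + C * σ t ^ 2) t := by
  rcases hσ with rfl | rfl
  · refine ⟨1, 0, -1, fun t => ?_⟩
    have := hasDerivAt_tanh t
    convert this using 1; ring
  · refine ⟨0, 1, -1, fun t => ?_⟩
    have := hasDerivAt_logistic t
    convert this using 1; ring



variable {L h : ℕ} {n : ℕ → ℕ}

/-- `netPreact` with a `ℕ` unit index (0 outside range), to avoid dependent types. -/
def preF (σ : ℝ → ℝ) (xp : Fin (n 0) → ℝ) (t j : ℕ) (θ : ParamIdx L n → ℝ) : ℝ :=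
  if hj : j < n (t + 1) then netPreact σ θ xp t ⟨j, hj⟩ else 0

section netlemmas

variable (σ : ℝ → ℝ) (xp : Fin (n 0) → ℝ)

lemma analyticAt_netWeight (t : ℕ) (j : Fin (n (t+1))) (i : Fin (n t + 1))
    (θ : ParamIdx L n → ℝ) :
    AnalyticAt ℝ (fun θ : ParamIdx L n → ℝ => netWeight θ t j i) θ := by
  unfold netWeight
  by_cases ht : t < L
  · simp only [ht, dif_pos]
    exact (ContinuousLinearMap.proj (R := ℝ) (φ := fun _ : ParamIdx L n => ℝ) ⟨⟨t, ht⟩, (j, i)⟩).analyticAt θ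
  · simp only [ht, dif_neg, not_false_iff]
    exact analyticAt_const

lemma analyticAt_netZ (hσa : ∀ t, AnalyticAt ℝ σ t) :
    ∀ (t : ℕ) (i : Fin (n t + 1)) (θ : ParamIdx L n → ℝ),
      AnalyticAt ℝ (fun θ => netZ σ θ xp t i) θ := by
  intro t
  induction t with
  | zero => intro i θ; exact analyticAt_const
  | succ t ih =>
    intro i θ
    refine Fin.cases ?_ ?_ i
    · exact analyticAt_const
    · intro i'
      have hrw : (fun θ : ParamIdx L n → ℝ => netZ σ θ xp (t+1) i'.succ)
          = fun θ => σ (∑ i, netWeight θ t i' i * netZ σ θ xp t i) := by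
        funext θ; simp [netZ]
      rw [hrw]
      exact (hσa _).comp <| Finset.analyticAt_fun_sum _ fun i _ =>
        (analyticAt_netWeight t i' i θ).mul (ih i θ)

lemma analyticAt_netPreact (hσa : ∀ t, AnalyticAt ℝ σ t) (t : ℕ) (j : Fin (n (t+1)))
    (θ : ParamIdx L n → ℝ) :
    AnalyticAt ℝ (fun θ => netPreact σ θ xp t j) θ := by
  unfold netPreact
  exact Finset.analyticAt_fun_sum _ fun i _ =>
    (analyticAt_netWeight t j i θ).mul (analyticAt_netZ σ xp hσa t i θ)

lemma analyticAt_preF (hσa : ∀ t, AnalyticAt ℝ σ t) (t j : ℕ) (θ : ParamIdx L n → ℝ) :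
    AnalyticAt ℝ (preF σ xp t j) θ := by
  unfold preF
  by_cases hj : j < n (t+1)
  · simp only [hj, dif_pos]; exact analyticAt_netPreact σ xp hσa t _ θ
  · simp only [hj, dif_neg, not_false_iff]; exact analyticAt_const

lemma analyticAt_netOutLin (hσa : ∀ t, AnalyticAt ℝ σ t) (θ : ParamIdx L n → ℝ) :
    AnalyticAt ℝ (fun θ => netOutLin σ θ xp) θ := by
  unfold netOutLin
  exact Finset.analyticAt_fun_sum _ fun j _ => analyticAt_netPreact σ xp hσa (L-1) j θ

lemma preF_zero_eq (j : ℕ) (hj : j < n 1) (θ : ParamIdx L n → ℝ) :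
    preF σ xp 0 j θ = ∑ i : Fin (n 0 + 1), netWeight θ 0 ⟨j, hj⟩ i * (Fin.cons 1 xp : Fin (n 0 + 1) → ℝ) i := by
  unfold preF
  rw [dif_pos hj]
  rfl

lemma preF_succ_eq (t j : ℕ) (hj : j < n (t + 2)) (θ : ParamIdx L n → ℝ) :
    preF σ xp (t+1) j θ = netWeight θ (t+1) ⟨j, hj⟩ 0
      + ∑ i : Fin (n (t+1)), netWeight θ (t+1) ⟨j, hj⟩ i.succ * σ (preF σ xp t i.1 θ) := by
  have hl : preF σ xp (t+1) j θ = netPreact σ θ xp (t+1) ⟨j, hj⟩ := dif_pos hj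
  rw [hl]
  unfold netPreact
  rw [Fin.sum_univ_succ]
  congr 1
  · simp [netZ]
  · refine Finset.sum_congr rfl fun i _ => ?_
    have hz : netZ σ θ xp (t+1) i.succ = σ (preF σ xp t i.1 θ) := by
      simp only [netZ, Fin.cons_succ]
      congr 1
      rw [show preF σ xp t i.1 θ = netPreact σ θ xp t ⟨i.1, i.2⟩ from dif_pos i.2]
      rfl
    rw [hz]

lemma sum_eq_of_card_one {M : ℕ} (hM : M = 1) (g : Fin M → ℝ) :
    ∑ j, g j = g ⟨0, by omega⟩ := by
  subst hM
  exact Fin.sum_univ_one g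

lemma netOutLin_eq_preF (hL : 2 ≤ L) (hout : n L = 1) (θ : ParamIdx L n → ℝ) :
    netOutLin σ θ xp = preF σ xp (L-1) 0 θ := by
  have hL1 : L - 1 + 1 = L := by omega
  have hM : n (L - 1 + 1) = 1 := by rw [hL1]; exact hout
  unfold netOutLin preF
  rw [dif_pos (show (0:ℕ) < n (L-1+1) by omega)]
  exact sum_eq_of_card_one hM _

end netlemmas



variable {ι : Type} [Fintype ι] [DecidableEq ι]

/-- `g` agrees on `U` with a polynomial of total degree at most `d` in the coordinates and
the functions `c k`. -/
def PolyOn (U : Set (ι → ℝ)) {N : ℕ} (c : Fin N → (ι → ℝ) → ℝ) (d : ℕ)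
    (g : (ι → ℝ) → ℝ) : Prop :=
  ∃ P : MvPolynomial (ι ⊕ Fin N) ℝ, P.totalDegree ≤ d ∧
    ∀ θ ∈ U, g θ = MvPolynomial.eval (Sum.elim θ fun k => c k θ) P

variable {U : Set (ι → ℝ)} {N : ℕ} {c : Fin N → (ι → ℝ) → ℝ} {d d₁ d₂ : ℕ}
  {g g₁ g₂ : (ι → ℝ) → ℝ}

theorem PolyOn.mono (hP : PolyOn U c d₁ g) (hd : d₁ ≤ d₂) : PolyOn U c d₂ g := by
  obtain ⟨P, h1, h2⟩ := hP; exact ⟨P, h1.trans hd, h2⟩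

theorem polyOn_const (r : ℝ) : PolyOn U c d (fun _ => r) :=
  ⟨C r, by simp [totalDegree_C], by simp⟩

theorem polyOn_coord (q : ι) : PolyOn U c 1 (fun θ => θ q) :=
  ⟨X (Sum.inl q), le_of_eq (totalDegree_X _), by simp⟩

theorem polyOn_chain (k : Fin N) : PolyOn U c 1 (fun θ => c k θ) :=
  ⟨X (Sum.inr k), le_of_eq (totalDegree_X _), by simp⟩

theorem PolyOn.add (h₁ : PolyOn U c d g₁) (h₂ : PolyOn U c d g₂) :
    PolyOn U c d (fun θ => g₁ θ + g₂ θ) := by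
  obtain ⟨P₁, hd₁, he₁⟩ := h₁; obtain ⟨P₂, hd₂, he₂⟩ := h₂
  exact ⟨P₁ + P₂, (totalDegree_add _ _).trans (max_le hd₁ hd₂),
    fun θ hθ => by simp [he₁ θ hθ, he₂ θ hθ]⟩

theorem PolyOn.neg (h₁ : PolyOn U c d g₁) : PolyOn U c d (fun θ => -(g₁ θ)) := by
  obtain ⟨P₁, hd₁, he₁⟩ := h₁
  exact ⟨-P₁, (totalDegree_neg _).le.trans hd₁, fun θ hθ => by simp [he₁ θ hθ]⟩

theorem PolyOn.sub (h₁ : PolyOn U c d g₁) (h₂ : PolyOn U c d g₂) :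
    PolyOn U c d (fun θ => g₁ θ - g₂ θ) := by
  have := h₁.add h₂.neg
  simpa [sub_eq_add_neg] using this

theorem PolyOn.mul (h₁ : PolyOn U c d₁ g₁) (h₂ : PolyOn U c d₂ g₂) :
    PolyOn U c (d₁ + d₂) (fun θ => g₁ θ * g₂ θ) := by
  obtain ⟨P₁, hd₁, he₁⟩ := h₁; obtain ⟨P₂, hd₂, he₂⟩ := h₂
  exact ⟨P₁ * P₂, (totalDegree_mul _ _).trans (add_le_add hd₁ hd₂),
    fun θ hθ => by simp [he₁ θ hθ, he₂ θ hθ]⟩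

theorem PolyOn.congr (h₁ : PolyOn U c d g₁) (hg : ∀ θ ∈ U, g₁ θ = g₂ θ) :
    PolyOn U c d g₂ := by
  obtain ⟨P₁, hd₁, he₁⟩ := h₁
  exact ⟨P₁, hd₁, fun θ hθ => (hg θ hθ) ▸ he₁ θ hθ⟩

theorem polyOn_finsetSum {A : Type*} {s : Finset A} {g : A → (ι → ℝ) → ℝ}
    (hg : ∀ a ∈ s, PolyOn U c d (g a)) :
    PolyOn U c d (fun θ => ∑ a ∈ s, g a θ) := by
  classical
  induction s using Finset.induction_on with
  | empty => simpa using (polyOn_const 0 : PolyOn U c d _)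
  | insert a s hni ih =>
    have h1 := hg a (s.mem_insert_self a)
    have h2 := ih fun b hb => hg b (Finset.mem_insert_of_mem hb)
    have := h1.add h2
    refine this.congr fun θ hθ => ?_
    rw [Finset.sum_insert hni]

theorem PolyOn.reindex {N' : ℕ} {c' : Fin N' → (ι → ℝ) → ℝ} (e : Fin N → Fin N')
    (hce : ∀ k, ∀ θ ∈ U, c k θ = c' (e k) θ) (hP : PolyOn U c d g) :
    PolyOn U c' d g := by
  obtain ⟨P, hd1, he⟩ := hP
  refine ⟨rename (Sum.map id e) P, (totalDegree_rename_le _ _).trans hd1, fun θ hθ => ?_⟩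
  rw [he θ hθ, eval_rename]
  have : (Sum.elim θ fun k => c' k θ) ∘ Sum.map id e = Sum.elim θ fun k => c k θ := by
    funext v; cases v with
    | inl q => rfl
    | inr k => exact (hce k θ hθ).symm
  rw [this]

theorem PolyOn.mono_set {U' : Set (ι → ℝ)} (hP : PolyOn U c d g) (hU : U' ⊆ U) :
    PolyOn U' c d g := by
  obtain ⟨P, h1, h2⟩ := hP; exact ⟨P, h1, fun θ hθ => h2 θ (hU hθ)⟩

theorem polyOn_smul (r : ℝ) (h₁ : PolyOn U c d g₁) : PolyOn U c d (fun θ => r * g₁ θ) := by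
  have := (polyOn_const (d := 0) (c := c) (U := U) r).mul h₁
  simpa using this

section deriv_toolkit

lemma fderiv_comp_scalar {E : Type*} [NormedAddCommGroup E] [NormedSpace ℝ E]
    {a : E → ℝ} {g : ℝ → ℝ} {g' : ℝ} (θ : E) (v : E)
    (ha : DifferentiableAt ℝ a θ) (hg : HasDerivAt g g' (a θ)) :
    fderiv ℝ (fun θ => g (a θ)) θ v = g' * fderiv ℝ a θ v := by
  have h1 := hg.comp_hasFDerivAt θ ha.hasFDerivAt
  have h2 : fderiv ℝ (fun θ => g (a θ)) θ = g' • fderiv ℝ a θ := h1.fderiv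
  rw [h2]
  simp

lemma fderiv_coord {ι : Type} [Fintype ι] [DecidableEq ι] (q k : ι) (θ : ι → ℝ) :
    fderiv ℝ (fun θ : ι → ℝ => θ q) θ (Pi.single k 1) = if q = k then (1:ℝ) else 0 := by
  have h1 : (fun θ : ι → ℝ => θ q)
      = (ContinuousLinearMap.proj (R := ℝ) (φ := fun _ : ι => ℝ) q) := rfl
  rw [h1, (ContinuousLinearMap.proj (R := ℝ) (φ := fun _ : ι => ℝ) q).fderiv]
  rw [ContinuousLinearMap.proj_apply, Pi.single_apply]

end deriv_toolkit

section main

variable {L h : ℕ} {n : ℕ → ℕ} (σ : ℝ → ℝ) (xp : Fin (n 0) → ℝ)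

/-- The chain functions for one datapoint, indexed by naturals:
`r < (L-1)*h` gives the hidden activations, then `tanh(out)`, `(tanh out)⁻¹`,
`(1 - tanh out)⁻¹`, `log (tanh out)`, `log (1 - tanh out)`. -/
def cfF (w r : ℕ) (θ : ParamIdx L n → ℝ) : ℝ :=
  if r < (L-1)*w then σ (preF σ xp (r/w) (r%w) θ)
  else if r = (L-1)*w then Real.tanh (netOutLin σ θ xp)
  else if r = (L-1)*w+1 then (Real.tanh (netOutLin σ θ xp))⁻¹
  else if r = (L-1)*w+2 then (1 - Real.tanh (netOutLin σ θ xp))⁻¹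
  else if r = (L-1)*w+3 then Real.log (Real.tanh (netOutLin σ θ xp))
  else Real.log (1 - Real.tanh (netOutLin σ θ xp))

lemma cfF_act (t j : ℕ) (hj : j < h) (ht : t < L - 1) :
    cfF (L := L) (n := n) σ xp h (t*h + j) = fun θ => σ (preF σ xp t j θ) := by
  have hh : 0 < h := by omega
  have hlt : t*h + j < (L-1)*h := by
    have h1 : t*h + j < (t+1)*h := by have := add_one_mul t h; omega
    have h2 : (t+1)*h ≤ (L-1)*h := Nat.mul_le_mul_right h (by omega)
    omega
  have hdiv : (t*h + j)/h = t := by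
    rw [add_comm, Nat.add_mul_div_right _ _ hh, Nat.div_eq_of_lt hj, zero_add]
  have hmod : (t*h + j) % h = j := by
    rw [add_comm, Nat.add_mul_mod_self_right, Nat.mod_eq_of_lt hj]
  funext θ
  unfold cfF
  rw [if_pos hlt, hdiv, hmod]

variable {A B Cc : ℝ}

set_option maxHeartbeats 1000000 in
lemma pre_deriv (hL : 2 ≤ L)
    (hhid : ∀ l : ℕ, 1 ≤ l → l ≤ L - 1 → n l = h)
    (hσa : ∀ t, AnalyticAt ℝ σ t)
    (hσD : ∀ t : ℝ, HasDerivAt σ (A + B * σ t + Cc * σ t ^ 2) t) :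
    ∀ t, t ≤ L - 1 → ∀ (j : ℕ) (k : ParamIdx L n),
    PolyOn Set.univ (fun q : Fin (t*h) => cfF (L := L) (n := n) σ xp h q.1) (3*t+1)
      (fun θ => fderiv ℝ (preF (L := L) (n := n) σ xp t j) θ (Pi.single k 1)) := by
  intro t
  induction t with
  | zero =>
    intro _ j k
    by_cases hj : j < n 1
    · have hrep : preF (L := L) (n := n) σ xp 0 j
          = fun θ : ParamIdx L n → ℝ => ∑ i : Fin (n 0 + 1),
              netWeight θ 0 ⟨j, hj⟩ i * (Fin.cons 1 xp : Fin (n 0 + 1) → ℝ) i :=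
        funext (preF_zero_eq σ xp j hj)
      have hL0 : (0:ℕ) < L := by omega
      have hW : ∀ i : Fin (n 0 + 1), (fun θ : ParamIdx L n → ℝ => netWeight θ 0 ⟨j, hj⟩ i)
          = fun θ => θ ⟨⟨0, hL0⟩, (⟨j, hj⟩, i)⟩ := by
        intro i; funext θ; exact dif_pos hL0
      refine (polyOn_const (∑ i : Fin (n 0 + 1),
        (if (⟨⟨0, hL0⟩, (⟨j, hj⟩, i)⟩ : ParamIdx L n) = k then (1:ℝ) else 0)
          * (Fin.cons 1 xp : Fin (n 0 + 1) → ℝ) i)).congr ?_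
      intro θ _
      rw [hrep]
      have hdiff : ∀ i : Fin (n 0 + 1), DifferentiableAt ℝ
          (fun θ : ParamIdx L n → ℝ =>
            netWeight θ 0 ⟨j, hj⟩ i * (Fin.cons 1 xp : Fin (n 0 + 1) → ℝ) i) θ := by
        intro i
        exact ((analyticAt_netWeight 0 ⟨j, hj⟩ i θ).differentiableAt).mul_const _
      rw [fderiv_fun_sum fun i _ => hdiff i]
      rw [ContinuousLinearMap.sum_apply]
      refine (Finset.sum_congr rfl fun i _ => ?_).symm
      rw [fderiv_mul_const ((analyticAt_netWeight 0 ⟨j, hj⟩ i θ).differentiableAt)]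
      rw [ContinuousLinearMap.smul_apply, smul_eq_mul, hW i, fderiv_coord]
      ring
    · have hrep : preF (L := L) (n := n) σ xp 0 j = fun _ : ParamIdx L n → ℝ => (0:ℝ) := by
        funext θ; exact dif_neg hj
      refine (polyOn_const 0).congr ?_
      intro θ _
      rw [hrep, fderiv_fun_const]
      simp
  | succ t ih =>
    intro ht j k
    have htL : t ≤ L - 1 := by omega
    have ht1L : t + 1 < L := by omega
    have hn1 : n (t+1) = h := hhid (t+1) (by omega) ht
    by_cases hj : j < n (t+2)
    swap
    · have hrep : preF (L := L) (n := n) σ xp (t+1) j = fun _ : ParamIdx L n → ℝ => (0:ℝ) := by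
        funext θ; exact dif_neg hj
      refine (polyOn_const 0).congr ?_
      intro θ _
      rw [hrep, fderiv_fun_const]
      simp
    -- main case
    have hrep : preF (L := L) (n := n) σ xp (t+1) j = fun θ : ParamIdx L n → ℝ =>
        netWeight θ (t+1) ⟨j, hj⟩ 0
        + ∑ i : Fin (n (t+1)), netWeight θ (t+1) ⟨j, hj⟩ i.succ * σ (preF (L := L) (n := n) σ xp t i.1 θ) :=
      funext (preF_succ_eq σ xp t j hj)
    -- coordinates
    set q : Fin (n (t+1) + 1) → ParamIdx L n :=
      fun i => ⟨⟨t+1, ht1L⟩, (⟨j, hj⟩, i)⟩ with hq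
    have hW : ∀ i : Fin (n (t+1) + 1), (fun θ : ParamIdx L n → ℝ => netWeight θ (t+1) ⟨j, hj⟩ i)
        = fun θ => θ (q i) := by
      intro i; funext θ; exact dif_pos ht1L
    -- chain indices for the activations of layer t+1
    have hidx : ∀ i : Fin (n (t+1)), t*h + i.1 < (t+1)*h := by
      intro i
      have h1 : i.1 < h := by have := i.2; omega
      have h2 : (t+1)*h = t*h + h := add_one_mul t h
      omega
    have hcf : ∀ i : Fin (n (t+1)),
        cfF (L := L) (n := n) σ xp h (t*h + i.1) = fun θ => σ (preF (L := L) (n := n) σ xp t i.1 θ) := by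
      intro i
      exact cfF_act σ xp t i.1 (by have := i.2; omega) (by omega)
    -- differentiability facts
    have dpre : ∀ (i : ℕ) (θ : ParamIdx L n → ℝ), DifferentiableAt ℝ (preF (L := L) (n := n) σ xp t i) θ :=
      fun i θ => (analyticAt_preF (L := L) (n := n) σ xp hσa t i θ).differentiableAt
    have dσpre : ∀ (i : ℕ) (θ : ParamIdx L n → ℝ),
        DifferentiableAt ℝ (fun θ => σ (preF (L := L) (n := n) σ xp t i θ)) θ :=
      fun i θ => ((hσD _).differentiableAt).comp θ (dpre i θ)
    -- the polynomial representation
    refine PolyOn.congr (g₁ := fun θ =>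
      (if q 0 = k then (1:ℝ) else 0)
      + ∑ i : Fin (n (t+1)),
          (θ (q i.succ) * ((A + B * cfF (L := L) (n := n) σ xp h (t*h + i.1) θ
              + Cc * cfF (L := L) (n := n) σ xp h (t*h + i.1) θ ^ 2)
            * fderiv ℝ (preF (L := L) (n := n) σ xp t i.1) θ (Pi.single k 1))
          + cfF (L := L) (n := n) σ xp h (t*h + i.1) θ
            * (if q i.succ = k then (1:ℝ) else 0))) ?_ ?_
    · -- PolyOn of the representation
      refine PolyOn.add ?_ ?_
      · exact polyOn_const _
      refine polyOn_finsetSum fun i _ => ?_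
      refine PolyOn.add ?_ ?_
      · -- θ (q i.succ) * (σ' * Dpre)  : degree 1 + (2 + (3t+1))
        have h1 : PolyOn Set.univ (fun q : Fin ((t+1)*h) => cfF (L := L) (n := n) σ xp h q.1)
            (3*t+1) (fun θ => fderiv ℝ (preF (L := L) (n := n) σ xp t i.1) θ (Pi.single k 1)) := by
          refine (ih htL i.1 k).reindex
            (Fin.castLE (by have := add_one_mul t h; omega : t*h ≤ (t+1)*h)) ?_
          intro k' θ _
          rfl
        have h2 : PolyOn Set.univ (fun q : Fin ((t+1)*h) => cfF (L := L) (n := n) σ xp h q.1)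
            2 (fun θ => A + B * cfF (L := L) (n := n) σ xp h (t*h + i.1) θ
              + Cc * cfF (L := L) (n := n) σ xp h (t*h + i.1) θ ^ 2) := by
          have hch : PolyOn Set.univ (fun q : Fin ((t+1)*h) =>
              cfF (L := L) (n := n) σ xp h q.1) 1
              (fun θ => cfF (L := L) (n := n) σ xp h (t*h + i.1) θ) :=
            (polyOn_chain (U := Set.univ) (c := fun q : Fin ((t+1)*h) =>
              cfF (L := L) (n := n) σ xp h q.1) ⟨t*h + i.1, hidx i⟩).congr fun θ _ => rfl
          refine PolyOn.congr (g₁ := fun θ =>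
            (A + B * cfF (L := L) (n := n) σ xp h (t*h + i.1) θ)
            + Cc * (cfF (L := L) (n := n) σ xp h (t*h + i.1) θ
              * cfF (L := L) (n := n) σ xp h (t*h + i.1) θ)) ?_ ?_
          · refine PolyOn.add (PolyOn.add (polyOn_const A) ?_) ?_
            · exact (polyOn_smul B hch).mono (show 1 ≤ 2 by omega)
            · exact (polyOn_smul Cc (hch.mul hch)).mono (show 1+1 ≤ 2 by omega)
          · intro θ _; ring
        have h3 := (polyOn_coord (U := Set.univ) (c := fun q : Fin ((t+1)*h) =>
          cfF (L := L) (n := n) σ xp h q.1) (q i.succ)).mul (h2.mul h1)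
        exact h3.mono (by omega)
      · -- cf * δ
        have hch : PolyOn Set.univ (fun q : Fin ((t+1)*h) =>
            cfF (L := L) (n := n) σ xp h q.1) 1
            (fun θ => cfF (L := L) (n := n) σ xp h (t*h + i.1) θ) :=
          (polyOn_chain (U := Set.univ) (c := fun q : Fin ((t+1)*h) =>
            cfF (L := L) (n := n) σ xp h q.1) ⟨t*h + i.1, hidx i⟩).congr fun θ _ => rfl
        exact ((hch.mul (polyOn_const (d := 0) _)).mono (show 1+0 ≤ 3*(t+1)+1 by omega))
    · -- pointwise derivative computation
      intro θ _
      beta_reduce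
      refine Eq.symm ?_
      -- rewrite the chain functions into network form
      have hrw : ∀ i : Fin (n (t+1)),
          cfF (L := L) (n := n) σ xp h (t*h + i.1) θ = σ (preF (L := L) (n := n) σ xp t i.1 θ) := by
        intro i; rw [hcf i]
      -- compute the derivative of preF (t+1) j
      have hd1 : ∀ i : Fin (n (t+1)), DifferentiableAt ℝ
          (fun θ : ParamIdx L n → ℝ =>
            netWeight θ (t+1) ⟨j, hj⟩ i.succ * σ (preF (L := L) (n := n) σ xp t i.1 θ)) θ := by
        intro i
        exact ((analyticAt_netWeight (t+1) ⟨j, hj⟩ i.succ θ).differentiableAt).mul (dσpre i.1 θ)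
      have hd2 : DifferentiableAt ℝ (fun θ : ParamIdx L n → ℝ =>
          ∑ i : Fin (n (t+1)), netWeight θ (t+1) ⟨j, hj⟩ i.succ * σ (preF (L := L) (n := n) σ xp t i.1 θ)) θ :=
        DifferentiableAt.fun_sum fun i _ => hd1 i
      rw [hrep]
      rw [fderiv_fun_add ((analyticAt_netWeight (t+1) ⟨j, hj⟩ 0 θ).differentiableAt) hd2]
      rw [ContinuousLinearMap.add_apply]
      rw [fderiv_fun_sum fun i _ => hd1 i, ContinuousLinearMap.sum_apply]
      congr 1
      · rw [hW 0, fderiv_coord]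
      refine Finset.sum_congr rfl fun i _ => ?_
      rw [fderiv_fun_mul ((analyticAt_netWeight (t+1) ⟨j, hj⟩ i.succ θ).differentiableAt)
        (dσpre i.1 θ)]
      rw [ContinuousLinearMap.add_apply, ContinuousLinearMap.smul_apply,
        ContinuousLinearMap.smul_apply, smul_eq_mul, smul_eq_mul]
      rw [fderiv_comp_scalar θ _ (dpre i.1 θ) (hσD (preF (L := L) (n := n) σ xp t i.1 θ))]
      rw [hW i.succ, fderiv_coord, hrw i]
      rw [show netWeight θ (t+1) ⟨j, hj⟩ i.succ = θ (q i.succ) from dif_pos ht1L]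
end main
section specials

variable {L h : ℕ} {n : ℕ → ℕ} (σ : ℝ → ℝ) (xp : Fin (n 0) → ℝ)

lemma cfF_eq_u : cfF (L := L) (n := n) σ xp h ((L-1)*h)
    = fun θ => Real.tanh (netOutLin σ θ xp) := by
  funext θ; unfold cfF; rw [if_neg (by omega), if_pos rfl]

lemma cfF_eq_v : cfF (L := L) (n := n) σ xp h ((L-1)*h+1)
    = fun θ => (Real.tanh (netOutLin σ θ xp))⁻¹ := by
  funext θ; unfold cfF; rw [if_neg (by omega), if_neg (by omega), if_pos rfl]

lemma cfF_eq_w : cfF (L := L) (n := n) σ xp h ((L-1)*h+2)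
    = fun θ => (1 - Real.tanh (netOutLin σ θ xp))⁻¹ := by
  funext θ; unfold cfF
  rw [if_neg (by omega), if_neg (by omega), if_neg (by omega), if_pos rfl]

lemma cfF_eq_lu : cfF (L := L) (n := n) σ xp h ((L-1)*h+3)
    = fun θ => Real.log (Real.tanh (netOutLin σ θ xp)) := by
  funext θ; unfold cfF
  rw [if_neg (by omega), if_neg (by omega), if_neg (by omega), if_neg (by omega), if_pos rfl]

lemma cfF_eq_lw (r : ℕ) (hr1 : ¬ r < (L-1)*h) (hr2 : r ≠ (L-1)*h) (hr3 : r ≠ (L-1)*h+1)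
    (hr4 : r ≠ (L-1)*h+2) (hr5 : r ≠ (L-1)*h+3) :
    cfF (L := L) (n := n) σ xp h r
    = fun θ => Real.log (1 - Real.tanh (netOutLin σ θ xp)) := by
  funext θ; unfold cfF
  rw [if_neg hr1, if_neg hr2, if_neg hr3, if_neg hr4, if_neg hr5]

variable {A B Cc : ℝ}

set_option maxHeartbeats 1000000 in
/-- The chain-derivative condition for each of the per-point chain functions. -/
lemma cf_chain (hL : 2 ≤ L)
    (hhid : ∀ l : ℕ, 1 ≤ l → l ≤ L - 1 → n l = h)
    (hout : n L = 1)
    (hσa : ∀ t, AnalyticAt ℝ σ t)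
    (hσD : ∀ t : ℝ, HasDerivAt σ (A + B * σ t + Cc * σ t ^ 2) t)
    (U : Set (ParamIdx L n → ℝ))
    (hU : ∀ θ ∈ U, Real.tanh (netOutLin σ θ xp) ∈ Set.Ioo (0:ℝ) 1)
    (r : ℕ) (hr : r < (L-1)*h + 5) (k : ParamIdx L n) :
    PolyOn U (fun q : Fin (r+1) => cfF (L := L) (n := n) σ xp h q.1) (3*(L-2)+7)
      (fun θ => fderiv ℝ (cfF (L := L) (n := n) σ xp h r) θ (Pi.single k 1)) := by
  have hdo : ∀ θ, DifferentiableAt ℝ (fun θ : ParamIdx L n → ℝ => netOutLin σ θ xp) θ :=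
    fun θ => (analyticAt_netOutLin σ xp hσa θ).differentiableAt
  have hdu : ∀ θ, DifferentiableAt ℝ
      (fun θ : ParamIdx L n → ℝ => Real.tanh (netOutLin σ θ xp)) θ :=
    fun θ => ((hasDerivAt_tanh _).differentiableAt).comp θ (hdo θ)
  -- derivative of tanh∘out
  have hDu : ∀ θ : ParamIdx L n → ℝ,
      fderiv ℝ (fun θ : ParamIdx L n → ℝ => Real.tanh (netOutLin σ θ xp)) θ (Pi.single k 1)
      = (1 - Real.tanh (netOutLin σ θ xp) ^ 2)
        * fderiv ℝ (fun θ : ParamIdx L n → ℝ => netOutLin σ θ xp) θ (Pi.single k 1) := by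
    intro θ
    exact fderiv_comp_scalar θ _ (hdo θ) (hasDerivAt_tanh _)
  by_cases hio : r < (L-1)*h
  · -- hidden activation
    have hh : 0 < h := by
      rcases Nat.eq_zero_or_pos h with h0 | h0
      · subst h0; rw [Nat.mul_zero] at hio; omega
      · exact h0
    set t := r / h with htdef
    have htl : t < L - 1 := (Nat.div_lt_iff_lt_mul hh).2 (by omega)
    have hcr : cfF (L := L) (n := n) σ xp h r
        = fun θ => σ (preF (L := L) (n := n) σ xp t (r % h) θ) := by
      funext θ; unfold cfF; rw [if_pos hio]
    have hth : t * h ≤ r := by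
      rw [htdef]
      have h1 := Nat.div_add_mod r h
      have h2 : h * (r / h) = (r / h) * h := Nat.mul_comm _ _
      omega
    have hDpre : PolyOn U (fun q : Fin (r+1) => cfF (L := L) (n := n) σ xp h q.1) (3*t+1)
        (fun θ => fderiv ℝ (preF (L := L) (n := n) σ xp t (r % h)) θ (Pi.single k 1)) := by
      refine ((pre_deriv σ xp hL hhid hσa hσD t (by omega) (r % h) k).mono_set
        (Set.subset_univ U)).reindex (Fin.castLE (by omega)) fun k' θ _ => rfl
    have hch : PolyOn U (fun q : Fin (r+1) => cfF (L := L) (n := n) σ xp h q.1) 1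
        (fun θ => cfF (L := L) (n := n) σ xp h r θ) :=
      (polyOn_chain (⟨r, by omega⟩ : Fin (r+1))).congr fun θ _ => rfl
    refine PolyOn.congr (g₁ := fun θ =>
        (A + B * cfF (L := L) (n := n) σ xp h r θ
          + Cc * (cfF (L := L) (n := n) σ xp h r θ * cfF (L := L) (n := n) σ xp h r θ))
        * fderiv ℝ (preF (L := L) (n := n) σ xp t (r % h)) θ (Pi.single k 1)) ?_ ?_
    · have h2 : PolyOn U (fun q : Fin (r+1) => cfF (L := L) (n := n) σ xp h q.1) 2
          (fun θ => A + B * cfF (L := L) (n := n) σ xp h r θ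
            + Cc * (cfF (L := L) (n := n) σ xp h r θ * cfF (L := L) (n := n) σ xp h r θ)) := by
        refine PolyOn.add (PolyOn.add (polyOn_const A) ?_) ?_
        · exact (polyOn_smul B hch).mono (show 1 ≤ 2 by omega)
        · exact (polyOn_smul Cc (hch.mul hch)).mono (show 1+1 ≤ 2 by omega)
      exact (h2.mul hDpre).mono (by omega)
    · intro θ _
      beta_reduce
      refine Eq.symm ?_
      have hcrθ : cfF (L := L) (n := n) σ xp h r θ
          = σ (preF (L := L) (n := n) σ xp t (r % h) θ) := by rw [hcr]
      have hstep : fderiv ℝ (cfF (L := L) (n := n) σ xp h r) θ (Pi.single k 1)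
          = (A + B * σ (preF (L := L) (n := n) σ xp t (r % h) θ)
             + Cc * σ (preF (L := L) (n := n) σ xp t (r % h) θ) ^ 2)
            * fderiv ℝ (preF (L := L) (n := n) σ xp t (r % h)) θ (Pi.single k 1) := by
        rw [hcr]
        exact fderiv_comp_scalar θ _
          ((analyticAt_preF σ xp hσa t (r % h) θ).differentiableAt) (hσD _)
      rw [hstep, hcrθ]
      ring
  · -- output functions
    have hα : 3*(L-1)+1 + 2 ≤ 3*(L-2)+7 := by omega
    have hDout : PolyOn U (fun q : Fin (r+1) => cfF (L := L) (n := n) σ xp h q.1) (3*(L-1)+1)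
        (fun θ => fderiv ℝ (fun θ : ParamIdx L n → ℝ => netOutLin σ θ xp) θ
          (Pi.single k 1)) := by
      have h0 : (fun θ : ParamIdx L n → ℝ => netOutLin σ θ xp)
          = preF (L := L) (n := n) σ xp (L-1) 0 :=
        funext fun θ => netOutLin_eq_preF σ xp hL hout θ
      rw [h0]
      exact ((pre_deriv σ xp hL hhid hσa hσD (L-1) le_rfl 0 k).mono_set
        (Set.subset_univ U)).reindex (Fin.castLE (by omega)) fun k' θ _ => rfl
    -- chain variables
    have hchu : PolyOn U (fun q : Fin (r+1) => cfF (L := L) (n := n) σ xp h q.1) 1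
        (fun θ => Real.tanh (netOutLin σ θ xp)) := by
      refine (polyOn_chain (⟨(L-1)*h, by omega⟩ : Fin (r+1))).congr fun θ _ => ?_
      exact congrFun (cfF_eq_u σ xp) θ
    have hu' : ∀ θ ∈ U, Real.tanh (netOutLin σ θ xp) ≠ 0 :=
      fun θ hθ => (hU θ hθ).1.ne'
    have h1u' : ∀ θ ∈ U, (1:ℝ) - Real.tanh (netOutLin σ θ xp) ≠ 0 :=
      fun θ hθ => sub_ne_zero.2 (ne_of_gt (hU θ hθ).2)
    have hcase : r = (L-1)*h ∨ r = (L-1)*h+1 ∨ r = (L-1)*h+2 ∨ r = (L-1)*h+3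
        ∨ r = (L-1)*h+4 := by omega
    have honele : (1:ℕ) ≤ 3*(L-2)+7 := by omega
    rcases hcase with hc | hc | hc | hc | hc
    · -- r = (L-1)*h : tanh (out)
      refine PolyOn.congr (g₁ := fun θ =>
          (1 - Real.tanh (netOutLin σ θ xp) * Real.tanh (netOutLin σ θ xp))
          * fderiv ℝ (fun θ : ParamIdx L n → ℝ => netOutLin σ θ xp) θ (Pi.single k 1)) ?_ ?_
      · refine (PolyOn.mul (d₁ := 2) ?_ hDout).mono (by omega)
        exact (polyOn_const 1).sub ((hchu.mul hchu).mono (show 1+1 ≤ 2 by omega))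
      · intro θ _
        beta_reduce
        refine Eq.symm ?_
        rw [hc, cfF_eq_u, hDu θ]
        ring
    · -- r = (L-1)*h + 1 : (tanh out)⁻¹
      have hchv : PolyOn U (fun q : Fin (r+1) => cfF (L := L) (n := n) σ xp h q.1) 1
          (fun θ => (Real.tanh (netOutLin σ θ xp))⁻¹) := by
        refine (polyOn_chain (⟨(L-1)*h+1, by omega⟩ : Fin (r+1))).congr fun θ _ => ?_
        exact congrFun (cfF_eq_v σ xp) θ
      refine PolyOn.congr (g₁ := fun θ =>
          (1 - (Real.tanh (netOutLin σ θ xp))⁻¹ * (Real.tanh (netOutLin σ θ xp))⁻¹)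
          * fderiv ℝ (fun θ : ParamIdx L n → ℝ => netOutLin σ θ xp) θ (Pi.single k 1)) ?_ ?_
      · refine (PolyOn.mul (d₁ := 2) ?_ hDout).mono (by omega)
        exact (polyOn_const 1).sub ((hchv.mul hchv).mono (show 1+1 ≤ 2 by omega))
      · intro θ hθ
        beta_reduce
        refine Eq.symm ?_
        have hstep : fderiv ℝ
            (fun θ : ParamIdx L n → ℝ => (Real.tanh (netOutLin σ θ xp))⁻¹) θ (Pi.single k 1)
            = -((Real.tanh (netOutLin σ θ xp))^2)⁻¹ * fderiv ℝ
              (fun θ : ParamIdx L n → ℝ => Real.tanh (netOutLin σ θ xp)) θ (Pi.single k 1) :=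
          fderiv_comp_scalar (g := fun y => y⁻¹) θ _ (hdu θ) (hasDerivAt_inv (hu' θ hθ))
        rw [hc, cfF_eq_v, hstep, hDu θ]
        have h0 := hu' θ hθ
        field_simp
        ring
    · -- r = (L-1)*h + 2 : (1 - tanh out)⁻¹
      have hchw : PolyOn U (fun q : Fin (r+1) => cfF (L := L) (n := n) σ xp h q.1) 1
          (fun θ => (1 - Real.tanh (netOutLin σ θ xp))⁻¹) := by
        refine (polyOn_chain (⟨(L-1)*h+2, by omega⟩ : Fin (r+1))).congr fun θ _ => ?_
        exact congrFun (cfF_eq_w σ xp) θ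
      refine PolyOn.congr (g₁ := fun θ =>
          ((1 + Real.tanh (netOutLin σ θ xp)) * (1 - Real.tanh (netOutLin σ θ xp))⁻¹)
          * fderiv ℝ (fun θ : ParamIdx L n → ℝ => netOutLin σ θ xp) θ (Pi.single k 1)) ?_ ?_
      · refine (PolyOn.mul (d₁ := 2) ?_ hDout).mono (by omega)
        exact (PolyOn.mul (d₁ := 1) ((polyOn_const 1).add hchu) hchw)
      · intro θ hθ
        beta_reduce
        refine Eq.symm ?_
        have hg : HasDerivAt (fun y : ℝ => (1 - y)⁻¹)
            (-(0-1) / (1 - Real.tanh (netOutLin σ θ xp)) ^ 2) (Real.tanh (netOutLin σ θ xp)) :=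
          ((hasDerivAt_const _ (1:ℝ)).sub (hasDerivAt_id _)).inv (h1u' θ hθ)
        have hstep : fderiv ℝ
            (fun θ : ParamIdx L n → ℝ => (1 - Real.tanh (netOutLin σ θ xp))⁻¹) θ (Pi.single k 1)
            = (-(0-1) / (1 - Real.tanh (netOutLin σ θ xp)) ^ 2) * fderiv ℝ
              (fun θ : ParamIdx L n → ℝ => Real.tanh (netOutLin σ θ xp)) θ (Pi.single k 1) :=
          fderiv_comp_scalar (g := fun y : ℝ => (1 - y)⁻¹) θ _ (hdu θ) hg
        rw [hc, cfF_eq_w, hstep, hDu θ]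
        have h0 := h1u' θ hθ
        field_simp
        ring
    · -- r = (L-1)*h + 3 : log (tanh out)
      have hchv : PolyOn U (fun q : Fin (r+1) => cfF (L := L) (n := n) σ xp h q.1) 1
          (fun θ => (Real.tanh (netOutLin σ θ xp))⁻¹) := by
        refine (polyOn_chain (⟨(L-1)*h+1, by omega⟩ : Fin (r+1))).congr fun θ _ => ?_
        exact congrFun (cfF_eq_v σ xp) θ
      refine PolyOn.congr (g₁ := fun θ =>
          ((Real.tanh (netOutLin σ θ xp))⁻¹ - Real.tanh (netOutLin σ θ xp))
          * fderiv ℝ (fun θ : ParamIdx L n → ℝ => netOutLin σ θ xp) θ (Pi.single k 1)) ?_ ?_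
      · exact ((hchv.sub hchu).mul hDout).mono (by omega)
      · intro θ hθ
        beta_reduce
        refine Eq.symm ?_
        have hstep : fderiv ℝ
            (fun θ : ParamIdx L n → ℝ => Real.log (Real.tanh (netOutLin σ θ xp))) θ
              (Pi.single k 1)
            = (Real.tanh (netOutLin σ θ xp))⁻¹ * fderiv ℝ
              (fun θ : ParamIdx L n → ℝ => Real.tanh (netOutLin σ θ xp)) θ (Pi.single k 1) :=
          fderiv_comp_scalar (g := Real.log) θ _ (hdu θ) (Real.hasDerivAt_log (hu' θ hθ))
        rw [hc, cfF_eq_lu, hstep, hDu θ]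
        have h0 := hu' θ hθ
        have hkey : (Real.tanh (netOutLin σ θ xp))⁻¹ * (1 - Real.tanh (netOutLin σ θ xp) ^ 2)
            = (Real.tanh (netOutLin σ θ xp))⁻¹ - Real.tanh (netOutLin σ θ xp) := by
          field_simp
        rw [← hkey]
        ring
    · -- r = (L-1)*h + 4 : log (1 - tanh out)
      refine PolyOn.congr (g₁ := fun θ =>
          (0 - (1 + Real.tanh (netOutLin σ θ xp)))
          * fderiv ℝ (fun θ : ParamIdx L n → ℝ => netOutLin σ θ xp) θ (Pi.single k 1)) ?_ ?_
      · exact (((polyOn_const 0).sub ((polyOn_const 1).add hchu)).mul hDout).mono (by omega)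
      · intro θ hθ
        beta_reduce
        refine Eq.symm ?_
        have hg : HasDerivAt (fun y : ℝ => Real.log (1 - y))
            ((0-1) / (1 - Real.tanh (netOutLin σ θ xp))) (Real.tanh (netOutLin σ θ xp)) :=
          ((hasDerivAt_const _ (1:ℝ)).sub (hasDerivAt_id _)).log (h1u' θ hθ)
        have hstep : fderiv ℝ
            (fun θ : ParamIdx L n → ℝ => Real.log (1 - Real.tanh (netOutLin σ θ xp))) θ
              (Pi.single k 1)
            = ((0-1) / (1 - Real.tanh (netOutLin σ θ xp))) * fderiv ℝ
              (fun θ : ParamIdx L n → ℝ => Real.tanh (netOutLin σ θ xp)) θ (Pi.single k 1) :=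
          fderiv_comp_scalar (g := fun y : ℝ => Real.log (1 - y)) θ _ (hdu θ) hg
        rw [cfF_eq_lw σ xp r (by omega) (by omega) (by omega) (by omega) (by omega),
          hstep, hDu θ]
        have h0 := h1u' θ hθ
        have h1 : (1:ℝ) - Real.tanh (netOutLin σ θ xp) ^ 2
            = (1 - Real.tanh (netOutLin σ θ xp)) * (1 + Real.tanh (netOutLin σ θ xp)) := by ring
        field_simp
        ring

set_option maxHeartbeats 1000000 in
lemma cf_analytic (hσa : ∀ t, AnalyticAt ℝ σ t)
    (U : Set (ParamIdx L n → ℝ))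
    (hU : ∀ θ ∈ U, Real.tanh (netOutLin σ θ xp) ∈ Set.Ioo (0:ℝ) 1)
    (r : ℕ) (hr : r < (L-1)*h + 5) :
    ∀ θ ∈ U, AnalyticAt ℝ (cfF (L := L) (n := n) σ xp h r) θ := by
  intro θ hθ
  have hu := hU θ hθ
  have hou : AnalyticAt ℝ (fun θ : ParamIdx L n → ℝ => netOutLin σ θ xp) θ :=
    analyticAt_netOutLin σ xp hσa θ
  have hta : AnalyticAt ℝ (fun θ : ParamIdx L n → ℝ => Real.tanh (netOutLin σ θ xp)) θ :=
    (analyticAt_tanh _).comp hou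
  by_cases hio : r < (L-1)*h
  · have hcr : cfF (L := L) (n := n) σ xp h r
        = fun θ => σ (preF (L := L) (n := n) σ xp (r/h) (r % h) θ) := by
      funext θ'; unfold cfF; rw [if_pos hio]
    rw [hcr]
    exact (hσa _).comp (analyticAt_preF σ xp hσa _ _ θ)
  · have hcase : r = (L-1)*h ∨ r = (L-1)*h+1 ∨ r = (L-1)*h+2 ∨ r = (L-1)*h+3
        ∨ r = (L-1)*h+4 := by omega
    rcases hcase with hc | hc | hc | hc | hc
    · rw [hc, cfF_eq_u]; exact hta
    · rw [hc, cfF_eq_v]; exact hta.inv hu.1.ne'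
    · rw [hc, cfF_eq_w]
      exact (analyticAt_const.sub hta).inv (sub_ne_zero.2 (ne_of_gt hu.2))
    · rw [hc, cfF_eq_lu]
      have h7 := AnalyticAt.comp (g := Real.log)
        (f := fun θ : ParamIdx L n → ℝ => Real.tanh (netOutLin σ θ xp)) (x := θ)
        (analyticAt_rlog hu.1) hta
      exact h7
    · rw [cfF_eq_lw σ xp r (by omega) (by omega) (by omega) (by omega) (by omega)]
      have hs : AnalyticAt ℝ (fun θ : ParamIdx L n → ℝ =>
          1 - Real.tanh (netOutLin σ θ xp)) θ := analyticAt_const.sub hta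
      have h8 := AnalyticAt.comp (g := Real.log)
        (f := fun θ : ParamIdx L n → ℝ => 1 - Real.tanh (netOutLin σ θ xp)) (x := θ)
        (analyticAt_rlog (show (0:ℝ) < 1 - Real.tanh (netOutLin σ θ xp) by
          linarith [hu.2])) hs
      exact h8

end specials


end S7Aux

/-- For a feedforward network with `L ≥ 2` layers, all hidden layers of
width `h`, hidden activation `tanh` or the logistic sigmoid, and last-layer output
`tanh(a^L)`, the BCE empirical risk on a dataset of `m` points, restricted to the open set
of parameters where all network outputs lie in `(0,1)`, is a Pfaffian function of format
`(3(L−2)+7, 1, m((L−1)h+5))`. -/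
theorem statement7 (L : ℕ) (hL : 2 ≤ L) (h : ℕ) (n : ℕ → ℕ)
    (hhid : ∀ l : ℕ, 1 ≤ l → l ≤ L - 1 → n l = h) (hout : n L = 1)
    (σ : ℝ → ℝ) (hσ : σ = Real.tanh ∨ σ = logisticFn)
    (m : ℕ) (x : Fin m → Fin (n 0) → ℝ) (y : Fin m → ℝ) :
    IsPfaffianWithFormat (ι := ParamIdx L n)
      {θ : ParamIdx L n → ℝ | ∀ p : Fin m, Real.tanh (netOutLin σ θ (x p)) ∈ Set.Ioo (0 : ℝ) 1}
      (fun θ => ∑ p, (-(y p) * Real.log (Real.tanh (netOutLin σ θ (x p))) -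
        (1 - y p) * Real.log (1 - Real.tanh (netOutLin σ θ (x p)))))
      (3 * (L - 2) + 7) 1 (m * ((L - 1) * h + 5)) := by
  classical
  obtain ⟨A, B, Cc, hσD⟩ := S7Aux.sigma_deriv hσ
  have hσa : ∀ t, AnalyticAt ℝ σ t := by
    rcases hσ with rfl | rfl
    · exact fun t => S7Aux.analyticAt_tanh t
    · exact fun t => S7Aux.analyticAt_logistic t
  set K := (L - 1) * h + 5 with hK
  have hK0 : 0 < K := by omega
  set U := {θ : ParamIdx L n → ℝ |
      ∀ p : Fin m, Real.tanh (netOutLin σ θ (x p)) ∈ Set.Ioo (0 : ℝ) 1} with hUdef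
  have hUp : ∀ (p : Fin m), ∀ θ ∈ U, Real.tanh (netOutLin σ θ (x p)) ∈ Set.Ioo (0:ℝ) 1 :=
    fun p θ hθ => hθ p
  have hdiv : ∀ i : Fin (m * K), i.1 / K < m := by
    intro i
    exact (Nat.div_lt_iff_lt_mul hK0).2 i.2
  set f : Fin (m * K) → (ParamIdx L n → ℝ) → ℝ :=
    fun i => S7Aux.cfF σ (x ⟨i.1 / K, hdiv i⟩) h (i.1 % K) with hf
  have hdec1 : ∀ (p : Fin m) (r : ℕ), r < K → (p.1 * K + r) / K = p.1 := by
    intro p r hr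
    rw [add_comm, Nat.add_mul_div_right _ _ hK0, Nat.div_eq_of_lt hr, zero_add]
  have hdec2 : ∀ (p : Fin m) (r : ℕ), r < K → (p.1 * K + r) % K = r := by
    intro p r hr
    rw [add_comm, Nat.add_mul_mod_self_right, Nat.mod_eq_of_lt hr]
  have hfval : ∀ (p : Fin m) (r : ℕ) (hr : r < K) (hi : p.1 * K + r < m * K),
      f ⟨p.1 * K + r, hi⟩ = S7Aux.cfF σ (x p) h r := by
    intro p r hr hi
    show S7Aux.cfF σ (x ⟨(p.1 * K + r) / K, hdiv ⟨p.1 * K + r, hi⟩⟩) h ((p.1 * K + r) % K) = _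
    rw [show (⟨(p.1 * K + r) / K, hdiv ⟨p.1 * K + r, hi⟩⟩ : Fin m) = p from
      Fin.ext (hdec1 p r hr), hdec2 p r hr]
  have hidxlt : ∀ (p : Fin m) (r : ℕ), r < K → p.1 * K + r < m * K := by
    intro p r hr
    have h1 : (p.1 + 1) * K ≤ m * K := Nat.mul_le_mul_right K p.2
    have h2 := add_one_mul p.1 K
    omega
  refine ⟨f, ⟨?_, by omega, ?_, ?_⟩, ?_⟩
  · -- IsOpen U
    have hUrw : U = ⋂ p : Fin m,
        (fun θ : ParamIdx L n → ℝ => Real.tanh (netOutLin σ θ (x p))) ⁻¹' Set.Ioo 0 1 := by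
      ext θ
      simp only [hUdef, Set.mem_setOf_eq, Set.mem_iInter, Set.mem_preimage]
    rw [hUrw]
    refine isOpen_iInter_of_finite fun p => ?_
    refine IsOpen.preimage ?_ isOpen_Ioo
    exact continuous_iff_continuousAt.2 fun θ =>
      ((S7Aux.analyticAt_tanh _).comp (S7Aux.analyticAt_netOutLin σ (x p) hσa θ)).continuousAt
  · -- analyticity of the chain functions
    intro i θ hθ
    exact S7Aux.cf_analytic σ (x ⟨i.1 / K, hdiv i⟩) hσa U (hUp _) (i.1 % K)
      (Nat.mod_lt _ hK0) θ hθ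
  · -- chain derivative condition
    intro i k
    have hr : i.1 % K < K := Nat.mod_lt _ hK0
    have hmain := S7Aux.cf_chain σ (x ⟨i.1 / K, hdiv i⟩) hL hhid hout hσa hσD U
      (hUp _) (i.1 % K) hr k
    have he : ∀ q : Fin (i.1 % K + 1), (i.1 / K) * K + q.1 < i.1 + 1 := by
      intro q
      have h1 := Nat.div_add_mod i.1 K
      have h2 : (i.1 / K) * K = K * (i.1 / K) := Nat.mul_comm _ _
      have h3 := q.2
      omega
    have hre := hmain.reindex (c' := fun q : Fin (i.1 + 1) => f (Fin.castLE i.isLt q))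
      (fun q => ⟨(i.1 / K) * K + q.1, he q⟩) ?_
    · obtain ⟨P, hdeg, hval⟩ := hre
      exact ⟨P, hdeg, fun θ hθ => hval θ hθ⟩
    · intro q θ hθ
      have h4 : q.1 < K := by have := q.2; omega
      show S7Aux.cfF σ (x ⟨i.1 / K, hdiv i⟩) h q.1 θ
          = f (Fin.castLE i.isLt ⟨(i.1 / K) * K + q.1, he q⟩) θ
      have h6 : (Fin.castLE i.isLt ⟨(i.1 / K) * K + q.1, he q⟩ : Fin (m * K))
          = ⟨(⟨i.1 / K, hdiv i⟩ : Fin m).1 * K + q.1,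
              hidxlt ⟨i.1 / K, hdiv i⟩ q.1 h4⟩ := Fin.ext rfl
      rw [h6, hfval ⟨i.1 / K, hdiv i⟩ q.1 h4]
  · -- the polynomial Q of the loss
    refine ⟨∑ p : Fin m,
      (MvPolynomial.C (-(y p)) * MvPolynomial.X (Sum.inr
          (⟨p.1 * K + ((L-1)*h + 3), hidxlt p _ (by omega)⟩ : Fin (m * K)))
        + MvPolynomial.C (-(1 - y p)) * MvPolynomial.X (Sum.inr
          (⟨p.1 * K + ((L-1)*h + 4), hidxlt p _ (by omega)⟩ : Fin (m * K)))), ?_, ?_⟩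
    · refine (MvPolynomial.totalDegree_finset_sum _ _).trans ?_
      refine Finset.sup_le fun p _ => ?_
      refine (MvPolynomial.totalDegree_add _ _).trans (max_le ?_ ?_) <;>
      · refine (MvPolynomial.totalDegree_mul _ _).trans ?_
        rw [MvPolynomial.totalDegree_C, MvPolynomial.totalDegree_X]
    · intro θ hθ
      rw [map_sum]
      refine Finset.sum_congr rfl fun p _ => ?_
      rw [map_add, map_mul, map_mul, MvPolynomial.eval_C, MvPolynomial.eval_C,
        MvPolynomial.eval_X, MvPolynomial.eval_X]
      simp only [Sum.elim_inr]
      rw [hfval p ((L-1)*h + 3) (by omega), hfval p ((L-1)*h + 4) (by omega)]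
      rw [congrFun (S7Aux.cfF_eq_lu σ (x p)) θ]
      rw [congrFun (S7Aux.cfF_eq_lw σ (x p) ((L-1)*h+4)
        (by omega) (by omega) (by omega) (by omega) (by omega)) θ]
      ring
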